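/- For integers r ≥ h+2 and h > 2, the inclusion matrix A(r,h), whose rows are indexed by h-element subsets of [r], whose columns are indexed by 2-element subsets of [r], and whose (S,T) entry is 1 if T ⊆ S and 0 otherwise, has rank equal to C(r,2) (over the rationals). -/

import Mathlib

open Finset
theorem gottlieb_key (r h : ℕ) (hh : 2 < h) (hr : h + 2 ≤ r)
    (X : Finset (Fin r) → ℚ)
    (H : ∀ S : Finset (Fin r), S.card = h → ∑ T ∈ S.powersetCard 2, X T = 0) :
    ∀ T : Finset (Fin r), T.card = 2 → X T = 0 := by
  classical
  -- existence of a set of size k disjoint from F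
  have exd : ∀ (F : Finset (Fin r)) (k : ℕ), F.card + k ≤ r →
      ∃ D : Finset (Fin r), Disjoint D F ∧ D.card = k := by
    intro F k hk
    obtain ⟨D, hDsub, hDc⟩ := Finset.exists_subset_card_eq (s := univ \ F) (n := k) (by
      rw [card_sdiff_of_subset (subset_univ F), card_univ, Fintype.card_fin]; omega)
    refine ⟨D, ?_, hDc⟩
    rw [Finset.disjoint_left]
    intro a haD haF
    exact (Finset.mem_sdiff.mp (hDsub haD)).2 haF
  -- expansion of the powersetCard-2 sum over insert a E
  have L1 : ∀ (a : Fin r) (E : Finset (Fin r)), a ∉ E →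
      ∑ T ∈ (insert a E).powersetCard 2, X T
        = (∑ e ∈ E, X {a, e}) + ∑ T ∈ E.powersetCard 2, X T := by
    intro a E haE
    have h2 : (2 : ℕ) = Nat.succ 1 := rfl
    rw [h2, powersetCard_succ_insert haE]
    have hdisj : Disjoint (E.powersetCard (Nat.succ 1))
        ((E.powersetCard 1).image (insert a)) := by
      rw [Finset.disjoint_left]
      intro T hT hT'
      obtain ⟨U, hU, rfl⟩ := Finset.mem_image.mp hT'
      have : insert a U ⊆ E := (mem_powersetCard.mp hT).1
      exact haE (this (mem_insert_self a U))
    rw [sum_union hdisj]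
    have himg : ∑ T ∈ (E.powersetCard 1).image (insert a), X T
        = ∑ e ∈ E, X {a, e} := by
      rw [Finset.sum_image ?hinj]
      case hinj =>
        intro U hU V hV hUV
        have hUa : a ∉ U := fun hc => haE ((mem_powersetCard.mp hU).1 hc)
        have hVa : a ∉ V := fun hc => haE ((mem_powersetCard.mp hV).1 hc)
        rw [← Finset.erase_insert hUa, hUV, Finset.erase_insert hVa]
      rw [powersetCard_one, Finset.sum_map]
      rfl
    rw [himg]
    ring
  -- two rows differing by one element
  have L2 : ∀ (E : Finset (Fin r)) (a b : Fin r), E.card = h - 1 → a ∉ E → b ∉ E →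
      ∑ e ∈ E, X {a, e} = ∑ e ∈ E, X {b, e} := by
    intro E a b hE haE hbE
    have hca : (insert a E).card = h := by
      rw [card_insert_of_notMem haE, hE]; omega
    have hcb : (insert b E).card = h := by
      rw [card_insert_of_notMem hbE, hE]; omega
    have ha := H _ hca
    have hb := H _ hcb
    rw [L1 a E haE] at ha
    rw [L1 b E hbE] at hb
    linarith
  -- difference independence
  have L3 : ∀ a b c d : Fin r, a ≠ b → a ≠ c → a ≠ d → b ≠ c → b ≠ d → c ≠ d →
      X {a, c} - X {b, c} = X {a, d} - X {b, d} := by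
    intro a b c d hab hac had hbc hbd hcd
    have hF : ({a, b, c, d} : Finset (Fin r)).card ≤ 4 := by
      apply le_trans (card_insert_le _ _)
      have := card_insert_le b ({c, d} : Finset (Fin r))
      have := card_insert_le c ({d} : Finset (Fin r))
      simp only [card_singleton] at *
      omega
    obtain ⟨D, hD, hDc⟩ := exd {a, b, c, d} (h - 2) (by omega)
    have hmem : ∀ x ∈ ({a, b, c, d} : Finset (Fin r)), x ∉ D := by
      intro x hx hxD
      exact (Finset.disjoint_left.mp hD hxD) hx
    have haD : a ∉ D := hmem a (by simp)
    have hbD : b ∉ D := hmem b (by simp)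
    have hcD : c ∉ D := hmem c (by simp)
    have hdD : d ∉ D := hmem d (by simp)
    have key : ∀ x : Fin r, x ∉ D → x ≠ a → x ≠ b →
        X {a, x} - X {b, x} = ∑ e ∈ D, X {b, e} - ∑ e ∈ D, X {a, e} := by
      intro x hxD hxa hxb
      have hE : (insert x D).card = h - 1 := by
        rw [card_insert_of_notMem hxD, hDc]; omega
      have haE : a ∉ insert x D := by
        simp only [mem_insert]; push_neg; exact ⟨hxa.symm, haD⟩
      have hbE : b ∉ insert x D := by
        simp only [mem_insert]; push_neg; exact ⟨hxb.symm, hbD⟩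
      have := L2 (insert x D) a b hE haE hbE
      rw [sum_insert hxD, sum_insert hxD] at this
      linarith
    rw [key c hcD hac.symm hbc.symm, key d hdD had.symm hbd.symm]
  -- first-argument independence
  have L5 : ∀ a b c : Fin r, a ≠ b → a ≠ c → b ≠ c → X {a, c} = X {b, c} := by
    intro a b c hab hac hbc
    have hF : ({a, b, c} : Finset (Fin r)).card ≤ 3 := by
      apply le_trans (card_insert_le _ _)
      have := card_insert_le b ({c} : Finset (Fin r))
      simp only [card_singleton] at *
      omega
    obtain ⟨D, hD, hDc⟩ := exd {a, b, c} (h - 2) (by omega)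
    have hmem : ∀ x ∈ ({a, b, c} : Finset (Fin r)), x ∉ D := fun x hx hxD =>
      (Finset.disjoint_left.mp hD hxD) hx
    have haD : a ∉ D := hmem a (by simp)
    have hbD : b ∉ D := hmem b (by simp)
    have hcD : c ∉ D := hmem c (by simp)
    set E := insert c D with hEdef
    have hE : E.card = h - 1 := by
      rw [hEdef, card_insert_of_notMem hcD, hDc]; omega
    have haE : a ∉ E := by
      rw [hEdef]; simp only [mem_insert]; push_neg; exact ⟨hac, haD⟩
    have hbE : b ∉ E := by
      rw [hEdef]; simp only [mem_insert]; push_neg; exact ⟨hbc, hbD⟩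
    have hsum := L2 E a b hE haE hbE
    have hcongr : ∀ e ∈ E, X {a, e} - X {b, e} = X {a, c} - X {b, c} := by
      intro e he
      rcases eq_or_ne e c with rfl | hec
      · rfl
      · have heD : e ∈ D := by
          rw [hEdef] at he
          rcases mem_insert.mp he with h1 | h1
          · exact absurd h1 hec
          · exact h1
        have hea : e ≠ a := fun hc => haD (hc ▸ heD)
        have heb : e ≠ b := fun hc => hbD (hc ▸ heD)
        exact L3 a b e c hab hea.symm hac heb.symm hbc hec
    have hzero : ∑ e ∈ E, (X {a, e} - X {b, e}) = 0 := by
      rw [Finset.sum_sub_distrib, hsum]; ring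
    rw [Finset.sum_congr rfl hcongr, Finset.sum_const, hE] at hzero
    have hne : ((h - 1 : ℕ) : ℚ) ≠ 0 := by
      rw [Nat.cast_ne_zero]; omega
    have := hzero
    rw [nsmul_eq_mul] at this
    have := mul_eq_zero.mp this
    rcases this with h1 | h1
    · exact absurd h1 hne
    · linarith
  -- all pair values are equal
  have Lconst : ∀ a b c d : Fin r, a ≠ b → c ≠ d → X {a, b} = X {c, d} := by
    intro a b c d hab hcd
    have : (univ \ ({a, b, c, d} : Finset (Fin r))).Nonempty := by
      rw [← Finset.card_pos, card_sdiff_of_subset (subset_univ _), card_univ, Fintype.card_fin]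
      have h4 : ({a, b, c, d} : Finset (Fin r)).card ≤ 4 := by
        apply le_trans (card_insert_le _ _)
        have := card_insert_le b ({c, d} : Finset (Fin r))
        have := card_insert_le c ({d} : Finset (Fin r))
        simp only [card_singleton] at *
        omega
      omega
    obtain ⟨e, he⟩ := this
    have he' := Finset.mem_sdiff.mp he
    simp only [mem_insert, mem_singleton] at he'
    push_neg at he'
    obtain ⟨-, hea, heb, hec, hed⟩ := he'
    have h1 : X {a, b} = X {e, b} := L5 a e b hea.symm hab heb
    have h2 : X {e, b} = X {b, e} := by rw [Finset.pair_comm]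
    have h3 : X {b, e} = X {c, e} := by
      rcases eq_or_ne b c with rfl | hbc
      · rfl
      · exact L5 b c e hbc heb.symm hec.symm
    have h4 : X {c, e} = X {e, c} := by rw [Finset.pair_comm]
    have h5 : X {e, c} = X {d, c} := L5 e d c hed hec hcd.symm
    have h6 : X {d, c} = X {c, d} := by rw [Finset.pair_comm]
    rw [h1, h2, h3, h4, h5, h6]
  intro T hT
  obtain ⟨a, b, hab, rfl⟩ := Finset.card_eq_two.mp hT
  obtain ⟨S, -, hS⟩ := Finset.exists_subset_card_eq (s := (univ : Finset (Fin r))) (n := h)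
    (by rw [card_univ, Fintype.card_fin]; omega)
  have h0 := H S hS
  have hcongr : ∀ T' ∈ S.powersetCard 2, X T' = X {a, b} := by
    intro T' hT'
    obtain ⟨c, d, hcd, rfl⟩ := Finset.card_eq_two.mp (mem_powersetCard.mp hT').2
    exact Lconst c d a b hcd hab
  rw [Finset.sum_congr rfl hcongr, Finset.sum_const, card_powersetCard, hS] at h0
  rw [nsmul_eq_mul] at h0
  rcases mul_eq_zero.mp h0 with h1 | h1
  · exfalso
    rw [Nat.cast_eq_zero] at h1
    have := Nat.choose_pos (show 2 ≤ h by omega)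
    omega
  · exact h1

theorem gottlieb_rank (r h : ℕ) (hh : 2 < h) (hr : h + 2 ≤ r) :
    (Matrix.of (fun (S : {S : Finset (Fin r) // S.card = h})
        (T : {T : Finset (Fin r) // T.card = 2}) =>
      if T.1 ⊆ S.1 then (1 : ℚ) else 0)).rank = r.choose 2 := by
  classical
  set M : Matrix {S : Finset (Fin r) // S.card = h} {T : Finset (Fin r) // T.card = 2} ℚ :=
    Matrix.of (fun S T => if T.1 ⊆ S.1 then (1 : ℚ) else 0) with hM
  have hinj : Function.Injective M.mulVecLin := by
    rw [← LinearMap.ker_eq_bot, LinearMap.ker_eq_bot']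
    intro x hx
    set X : Finset (Fin r) → ℚ :=
      fun T => if hT : T.card = 2 then x ⟨T, hT⟩ else 0 with hXdef
    have hXval : ∀ T : {T : Finset (Fin r) // T.card = 2}, X T.1 = x T := by
      intro T
      rw [hXdef]
      simp only [T.2, dif_pos]
    have key : ∀ T : Finset (Fin r), T.card = 2 → X T = 0 := by
      apply gottlieb_key r h hh hr
      intro S hS
      have hxS : (M.mulVecLin x) ⟨S, hS⟩ = 0 := by rw [hx]; rfl
      rw [Matrix.mulVecLin_apply] at hxS
      have hrow : M.mulVec x ⟨S, hS⟩
          = ∑ T : {T : Finset (Fin r) // T.card = 2}, (if T.1 ⊆ S then X T.1 else 0) := by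
        simp only [Matrix.mulVec, dotProduct, hM, Matrix.of_apply]
        refine Finset.sum_congr rfl fun T _ => ?_
        rw [hXval T]
        split <;> simp
      rw [hrow] at hxS
      rw [← hxS]
      rw [← Finset.sum_subtype (Finset.univ.filter (fun T : Finset (Fin r) => T.card = 2))
        (by intro T; simp) (fun T => if T ⊆ S then X T else 0)]
      rw [Finset.sum_ite, Finset.sum_const, smul_zero, add_zero]
      apply Finset.sum_congr _ (fun _ _ => rfl)
      ext T
      simp only [mem_powersetCard, Finset.mem_filter, Finset.mem_univ, true_and]
      tauto
    funext T
    rw [← hXval T]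
    exact key T.1 T.2
  have : M.rank = Fintype.card {T : Finset (Fin r) // T.card = 2} := by
    rw [Matrix.rank, LinearMap.finrank_range_of_inj hinj, Module.finrank_pi]
  rw [this, Fintype.card_finset_len, Fintype.card_fin]
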